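/- Let p be a prime, G a finite group, and N a normal subgroup of G such that the center Z(N) is a p-group. Let ρ : Aut_N(G) → Aut(G/N) × Aut(N) be the natural homomorphism. Then the induced homomorphism of group algebras 𝔽_p[Aut_N(G)] → 𝔽_p[Im(ρ)] (induced by the corestriction of ρ onto its image) is surjective and its kernel is a nilpotent ideal. (Corollary 2.2.) -/

import Mathlib

open Pointwise

open MonoidAlgebra

universe u

section Aux

variable {R : Type*} [CommRing R] {H Q : Type*} [Group H] [Group Q]

/-- generating set of the kernel of `mapDomain f` -/
def myGenSet (f : H →* Q) : Set (MonoidAlgebra R H) :=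
  {a | ∃ h k, k ∈ f.ker ∧ a = single h 1 * (1 - single k 1)}

theorem ker_le_span (f : H →* Q) (x : MonoidAlgebra R H)
    (hx : Finsupp.mapDomain f x.coeff = 0) : x ∈ Submodule.span R (myGenSet (R := R) f) := by
  classical
  set s : Q → H := Function.invFun f with hs_def
  have hs : ∀ h, f (s (f h)) = f h := fun h => Function.invFun_eq ⟨h, rfl⟩
  have key : x = ∑ h ∈ x.coeff.support, (single h (x.coeff h) - single (s (f h)) (x.coeff h)) := by
    rw [Finset.sum_sub_distrib]
    have h1 : ∑ h ∈ x.coeff.support, single h (x.coeff h) = x := x.sum_coeff_single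
    have h2 : ∑ h ∈ x.coeff.support, single (s (f h)) (x.coeff h)
        = MonoidAlgebra.ofCoeff (Finsupp.mapDomain (s ∘ f) x.coeff) := by
      rw [Finsupp.mapDomain, ofCoeff_finsuppSum]
      rfl
    rw [h1, h2, Finsupp.mapDomain_comp, hx, Finsupp.mapDomain_zero, ofCoeff_zero, sub_zero]
  rw [key]
  refine Submodule.sum_mem _ fun h hh => ?_
  have hk : h⁻¹ * s (f h) ∈ f.ker := by
    simp [MonoidHom.mem_ker, hs h]
  have : single h (x.coeff h) - single (s (f h)) (x.coeff h)
      = (x.coeff h) • (single h 1 * (1 - single (h⁻¹ * s (f h)) 1)) := by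
    rw [mul_sub, mul_one, single_mul_single, mul_inv_cancel_left, one_mul, smul_sub,
      smul_single', smul_single']
    simp
  rw [this]
  exact Submodule.smul_mem _ _ (Submodule.subset_span ⟨h, _, hk, rfl⟩)

theorem gen_prod (f : H →* Q) :
    ∀ l : List (H × H), (∀ q ∈ l, q.2 ∈ f.ker) →
      ∃ (h : H) (ks : List H), (∀ k ∈ ks, k ∈ f.ker) ∧ ks.length = l.length ∧
        (l.map fun q => single q.1 (1 : R) * (1 - single q.2 1)).prod
          = single h 1 * (ks.map fun k => (1 : MonoidAlgebra R H) - single k 1).prod := by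
  intro l
  induction l with
  | nil => exact fun _ => ⟨1, [], by simp, rfl, by simp [one_def]⟩
  | cons q l ih =>
    intro hl
    obtain ⟨h, ks, hks, hlen, hprod⟩ := ih fun a ha => hl a (List.mem_cons_of_mem _ ha)
    have hq : q.2 ∈ f.ker := hl q (List.mem_cons_self)
    refine ⟨q.1 * h, (h⁻¹ * q.2 * h) :: ks, ?_, by simp [hlen], ?_⟩
    · intro k hk
      rcases List.mem_cons.mp hk with rfl | hk
      ·
        have := (MonoidHom.normal_ker f).conj_mem q.2 hq h⁻¹
        have := (MonoidHom.normal_ker f).conj_mem q.2 hq h⁻¹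
        rwa [inv_inv] at this
      · exact hks k hk
    · have swap : (1 - single q.2 1) * single h 1
          = single h 1 * (1 - single (h⁻¹ * q.2 * h) (1 : R)) := by
        rw [sub_mul, mul_sub, one_mul, mul_one, single_mul_single, single_mul_single,
          one_mul]
        congr 2
        group
      rw [List.map_cons, List.prod_cons, hprod, ← mul_assoc, mul_assoc (single q.1 1), swap,
        List.map_cons, List.prod_cons, ← mul_assoc, single_mul_single, mul_one, mul_assoc]

theorem central_pow_comm {A : Type*} [Ring A] {W : A}
    (hW : ∀ x, W * x = x * W) (s : ℕ) : ∀ x, W ^ s * x = x * W ^ s := by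
  induction s with
  | zero => simp
  | succ n ih => intro x; rw [pow_succ, mul_assoc, hW, ← mul_assoc, ih, mul_assoc]


theorem aug_nil (p : ℕ) [Fact p.Prime] :
    ∀ (c : ℕ) (K : Type u) (_ : Group K) (_ : Finite K), Nat.card K ≤ c → IsPGroup p K →
      ∃ m : ℕ, 0 < m ∧ ∀ l : List K, l.length = m →
        (l.map fun k => (1 : MonoidAlgebra (ZMod p) K) - single k 1).prod = 0 := by
  intro c
  induction c with
  | zero => intro K _ _ hle _; exact absurd hle (by simp [Nat.card_pos.ne'])
  | succ c ih =>
    intro K _ _ hle hK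
    by_cases htriv : ∀ k : K, k = 1
    · refine ⟨1, one_pos, ?_⟩
      intro l hl
      match l, hl with
      | [k], _ => simp [htriv k, one_def]
    · push_neg at htriv
      obtain ⟨k0, hk0⟩ := htriv
      have hnt : Nontrivial K := ⟨⟨k0, 1, hk0⟩⟩
      have hcenter : Nontrivial (Subgroup.center K) := IsPGroup.center_nontrivial hK
      obtain ⟨z, hz1⟩ := exists_ne (1 : Subgroup.center K)
      set zc : K := (z : K) with hzc_def
      have hzc1 : zc ≠ 1 := fun h => hz1 (Subtype.ext h)
      have hzcc : zc ∈ Subgroup.center K := z.2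
      set C : Subgroup K := Subgroup.zpowers zc with hC
      have hCnormal : C.Normal := by
        constructor
        intro n hn g
        have hnc : n ∈ Subgroup.center K := Subgroup.zpowers_le.mpr hzcc hn
        have hng := Subgroup.mem_center_iff.mp hnc g
        rw [hng, mul_inv_cancel_right]
        exact hn
      have hCnt : Nontrivial C :=
        ⟨⟨zc, Subgroup.mem_zpowers zc⟩, 1, fun h => hzc1 (congrArg Subtype.val h)⟩
      have hcard : Nat.card (K ⧸ C) < Nat.card K := by
        rw [Subgroup.card_eq_card_quotient_mul_card_subgroup C]
        exact Nat.lt_mul_iff_one_lt_right Nat.card_pos |>.mpr Finite.one_lt_card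
      obtain ⟨m₀, hm₀pos, hm₀⟩ :=
        ih (K ⧸ C) inferInstance inferInstance (by omega) (hK.to_quotient C)
      set A := MonoidAlgebra (ZMod p) K with hA
      haveI hcharP : CharP A p :=
        charP_of_injective_ringHom
          (f := (singleOneRingHom : ZMod p →+* MonoidAlgebra (ZMod p) K))
          (fun a b hab => MonoidAlgebra.single_right_injective (m := (1 : K)) hab) p
      set t : A := single zc 1 with ht
      have hcomm : ∀ x : A, t * x = x * t := by
        intro x
        induction x using MonoidAlgebra.induction_linear with
        | zero => simp
        | add f g hf hg => rw [mul_add, add_mul, hf, hg]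
        | single k r =>
          show t * single k r = single k r * t
          rw [ht, single_mul_single, single_mul_single, Subgroup.mem_center_iff.mp hzcc k,
            one_mul, mul_one]
      set W : A := 1 - t with hW
      have hWc : ∀ x : A, W * x = x * W := by
        intro x; rw [hW, sub_mul, mul_sub, one_mul, mul_one, hcomm]
      obtain ⟨a, ha⟩ := hK zc
      have htpow : t ^ p ^ a = 1 := by
        rw [ht, single_pow, ha, one_pow, ← one_def]
      have hWpow : W ^ p ^ a = 0 := by
        rw [hW, sub_pow_char_pow_of_commute p a (Commute.one_left t), one_pow, htpow, sub_self]
      have hgeom : ∀ j : ℕ, ∃ u : A, 1 - t ^ j = W * u := by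
        intro j
        induction j with
        | zero => exact ⟨0, by simp⟩
        | succ n ihn =>
          obtain ⟨u, hu⟩ := ihn
          refine ⟨u + t ^ n, ?_⟩
          have h1 : W * t ^ n = t ^ n - t ^ (n + 1) := by
            rw [hW, sub_mul, one_mul, ← pow_succ']
          rw [mul_add, ← hu, h1]
          abel
      set g : K →* K ⧸ C := QuotientGroup.mk' C with hg
      have hblock : ∀ l : List K, l.length = m₀ →
          ∃ v : A, (l.map fun k => (1 : A) - single k 1).prod = W * v := by
        intro l hl
        have h1 : (MonoidAlgebra.mapDomainRingHom (ZMod p) g)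
            ((l.map fun k => (1 : A) - single k 1).prod) = 0 := by
          rw [map_list_prod, List.map_map]
          have h2 : ((MonoidAlgebra.mapDomainRingHom (ZMod p) g) ∘ fun k => (1 : A) - single k 1)
              = (fun q => (1 : MonoidAlgebra (ZMod p) (K ⧸ C)) - single q 1) ∘ g := by
            funext k
            show (MonoidAlgebra.mapDomainRingHom (ZMod p) g) (1 - single k 1)
              = 1 - single (g k) 1
            rw [map_sub, map_one]
            congr 1
            show MonoidAlgebra.mapDomain g (single k (1 : ZMod p)) = single (g k) 1
            exact MonoidAlgebra.mapDomain_single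
          rw [h2, ← List.map_map]
          exact hm₀ (l.map g) (by simp [hl])
        have hx := ker_le_span (R := ZMod p) g _ (congrArg MonoidAlgebra.coeff h1)
        have hle : Submodule.span (ZMod p) (myGenSet (R := ZMod p) g)
            ≤ LinearMap.range (LinearMap.mulLeft (ZMod p) W) := by
          rw [Submodule.span_le]
          rintro _ ⟨h, kk, hkk, rfl⟩
          have hkC : kk ∈ C := by rwa [hg, QuotientGroup.ker_mk'] at hkk
          obtain ⟨j, hj⟩ := mem_powers_iff_mem_zpowers.mpr hkC
          have hj' : zc ^ j = kk := hj
          obtain ⟨u, hu⟩ := hgeom j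
          refine ⟨single h 1 * u, ?_⟩
          have hsk : single kk (1 : ZMod p) = t ^ j := by
            rw [ht, single_pow, one_pow, hj']
          rw [LinearMap.mulLeft_apply, ← mul_assoc, hWc (single h 1), mul_assoc, ← hu, ← hsk]
        obtain ⟨v, hv⟩ := hle hx
        exact ⟨v, hv.symm⟩
      have hblocks : ∀ s : ℕ, ∀ l : List K, l.length = m₀ * s →
          ∃ v : A, (l.map fun k => (1 : A) - single k 1).prod = W ^ s * v := by
        intro s
        induction s with
        | zero =>
          intro l hl
          rw [Nat.mul_zero] at hl
          rw [List.length_eq_zero_iff.mp hl]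
          exact ⟨1, by simp⟩
        | succ s ihs =>
          intro l hl
          have h1 : (l.take m₀).length = m₀ := by
            rw [List.length_take, hl, Nat.mul_succ]; omega
          have h2 : (l.drop m₀).length = m₀ * s := by
            rw [List.length_drop, hl, Nat.mul_succ]; omega
          obtain ⟨v₁, hv₁⟩ := hblock _ h1
          obtain ⟨v₂, hv₂⟩ := ihs _ h2
          refine ⟨v₁ * v₂, ?_⟩
          have h3 : v₁ * (W ^ s * v₂) = W ^ s * (v₁ * v₂) := by
            rw [← mul_assoc, ← central_pow_comm hWc s v₁, mul_assoc]
          conv_lhs => rw [← List.take_append_drop m₀ l]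
          rw [List.map_append, List.prod_append, hv₁, hv₂, mul_assoc W v₁, h3, ← mul_assoc,
            ← pow_succ']
      refine ⟨m₀ * p ^ a, Nat.mul_pos hm₀pos (pow_pos (Nat.Prime.pos Fact.out) a), ?_⟩
      intro l hl
      obtain ⟨v, hv⟩ := hblocks (p ^ a) l hl
      rw [hv, hWpow, zero_mul]

theorem list_prod_mem_pow {R A : Type*} [CommSemiring R] [Semiring A] [Algebra R A]
    (J : Submodule R A) : ∀ l : List A, (∀ x ∈ l, x ∈ J) → l.prod ∈ J ^ l.length := by
  intro l
  induction l with
  | nil => intro _; rw [List.prod_nil, List.length_nil, pow_zero]; exact Submodule.one_le.mp le_rfl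
  | cons a l ih =>
    intro hmem
    rw [List.prod_cons, List.length_cons, pow_succ']
    exact Submodule.mul_mem_mul (hmem a (List.mem_cons_self))
      (ih fun x hx => hmem x (List.mem_cons_of_mem _ hx))

theorem ker_nilpotent (p : ℕ) [Fact p.Prime] {H Q : Type u} [Group H] [Group Q] [Finite H]
    (f : H →* Q) (hK : IsPGroup p f.ker) :
    ∃ n : ℕ, ∀ l : List (MonoidAlgebra (ZMod p) H),
      (∀ x ∈ l, MonoidAlgebra.mapDomainRingHom (ZMod p) f x = 0) → l.length = n →
        l.prod = 0 := by
  classical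
  obtain ⟨m, hmpos, hm⟩ := aug_nil p (Nat.card ↥f.ker) ↥f.ker inferInstance inferInstance
    le_rfl hK
  have B' : ∀ ks : List H, (∀ k ∈ ks, k ∈ f.ker) → ks.length = m →
      (ks.map fun k => (1 : MonoidAlgebra (ZMod p) H) - single k 1).prod = 0 := by
    intro ks hks hlen
    set ι := MonoidAlgebra.mapDomainRingHom (ZMod p) f.ker.subtype with hι
    set ks' : List ↥f.ker := ks.attach.map (fun x => ⟨x.1, hks x.1 x.2⟩) with hks'
    have h0 := hm ks' (by rw [hks', List.length_map, List.length_attach, hlen])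
    have h1 := congrArg ι h0
    rw [map_zero, map_list_prod, List.map_map, List.map_map] at h1
    have h2 : ((ι ∘ fun k => (1 : MonoidAlgebra (ZMod p) ↥f.ker) - single k 1)
          ∘ (fun x : {x // x ∈ ks} => (⟨x.1, hks x.1 x.2⟩ : ↥f.ker)))
        = (fun k => (1 : MonoidAlgebra (ZMod p) H) - single k 1) ∘ (Subtype.val) := by
      funext x
      show ι (1 - single (⟨x.1, hks x.1 x.2⟩ : ↥f.ker) 1) = 1 - single x.1 1
      rw [map_sub, map_one]
      congr 1
      show MonoidAlgebra.mapDomain f.ker.subtype (single (⟨x.1, hks x.1 x.2⟩ : ↥f.ker) (1 : ZMod p))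
        = single x.1 1
      rw [MonoidAlgebra.mapDomain_single]
      rfl
    rw [h2, ← List.map_map, List.attach_map_subtype_val] at h1
    exact h1
  refine ⟨m, ?_⟩
  intro l hl hlen
  have hJ : ∀ x ∈ l, x ∈ Submodule.span (ZMod p) (myGenSet (R := ZMod p) f) :=
    fun x hx => ker_le_span f x (congrArg MonoidAlgebra.coeff (hl x hx))
  have hprod := list_prod_mem_pow _ l hJ
  rw [hlen, Submodule.span_pow] at hprod
  have hzero : myGenSet (R := ZMod p) f ^ m ⊆ {(0 : MonoidAlgebra (ZMod p) H)} := by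
    intro a ha
    rw [Set.mem_pow] at ha
    obtain ⟨F, hF⟩ := ha
    choose hh kk hker heq using fun i => (F i).2
    have hlist : (List.ofFn fun i => ((F i : MonoidAlgebra (ZMod p) H))) =
        (List.ofFn fun i => ((hh i, kk i) : H × H)).map
          (fun q => single q.1 (1 : ZMod p) * (1 - single q.2 1)) := by
      rw [List.map_ofFn]
      exact congrArg List.ofFn (funext fun i => heq i)
    obtain ⟨h, ks, hks, hlen2, hprod2⟩ := gen_prod (R := ZMod p) f (List.ofFn fun i => (hh i, kk i)) (by
      intro q hq
      rw [List.mem_ofFn] at hq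
      obtain ⟨i, rfl⟩ := hq
      exact hker i)
    have hks0 := B' ks hks (by rw [hlen2, List.length_ofFn])
    rw [Set.mem_singleton_iff, ← hF, hlist, hprod2, hks0, mul_zero]
  have hfin := Submodule.span_mono hzero hprod
  rw [Submodule.span_zero_singleton] at hfin
  exact hfin

end Aux

/-- **Corollary 2.2.** Let `p` be a prime, `G` a finite group, and `N` a normal subgroup
of `G` whose center `Z(N)` is a `p`-group.  Let `ρ : Aut_N(G) → Aut(G/N) × Aut(N)` be the
natural homomorphism, where `Aut_N(G)` is the group of automorphisms of `G` mapping `N`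
to itself (the stabilizer of `N` in `MulAut G`).  Then the induced map of group algebras
`𝔽_p[Aut_N(G)] → 𝔽_p[Im ρ]` (induced by the corestriction of `ρ` onto its range) is
surjective and its kernel is a nilpotent ideal (some power `n` of the kernel vanishes,
i.e. every product of `n` elements of the kernel is `0`). -/
theorem fp_aut_map_surjective_nilpotent_kernel (p : ℕ) [Fact p.Prime]
    {G : Type*} [Group G] [Finite G] (N : Subgroup G) [N.Normal]
    (hZ : IsPGroup p (Subgroup.center ↥N))
    (ρ : ↥(MulAction.stabilizer (MulAut G) N) →* MulAut (G ⧸ N) × MulAut ↥N)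
    (hρ : ∀ φ : ↥(MulAction.stabilizer (MulAut G) N),
      (∀ g : G, (ρ φ).1 ((g : G ⧸ N)) = (((φ : MulAut G) g : G) : G ⧸ N)) ∧
      (∀ n : ↥N, (((ρ φ).2 n : ↥N) : G) = (φ : MulAut G) (n : G))) :
    Function.Surjective (MonoidAlgebra.mapDomainRingHom (ZMod p) ρ.rangeRestrict) ∧
    ∃ n : ℕ, ∀ l : List (MonoidAlgebra (ZMod p) ↥(MulAction.stabilizer (MulAut G) N)),
      (∀ x ∈ l, x ∈ RingHom.ker (MonoidAlgebra.mapDomainRingHom (ZMod p) ρ.rangeRestrict)) →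
      l.length = n → l.prod = 0 := by
  classical
  haveI : Finite (MulAut G) :=
    Finite.of_injective (fun e => (e : G → G)) DFunLike.coe_injective
  constructor
  · -- surjectivity
    intro y
    refine ⟨MonoidAlgebra.ofCoeff (Finsupp.mapDomain (Function.surjInv ρ.rangeRestrict_surjective) y.coeff), ?_⟩
    show MonoidAlgebra.ofCoeff (Finsupp.mapDomain ρ.rangeRestrict
      (Finsupp.mapDomain (Function.surjInv ρ.rangeRestrict_surjective) y.coeff)) = y
    rw [← Finsupp.mapDomain_comp]
    have hcomp : (ρ.rangeRestrict : _ → _) ∘ Function.surjInv ρ.rangeRestrict_surjective = id :=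
      funext fun q => Function.surjInv_eq ρ.rangeRestrict_surjective q
    rw [hcomp, Finsupp.mapDomain_id]
  · -- nilpotent kernel
    obtain ⟨k, hk⟩ := IsPGroup.iff_card.mp hZ
    have hker : ∀ φ : ↥(MulAction.stabilizer (MulAut G) N), φ ∈ ρ.ker → φ ^ p ^ k = 1 := by
      intro φ hφ
      have hφ1 : ρ φ = 1 := hφ
      have h1 : ∀ g : G, ((g : G ⧸ N)) = (((φ : MulAut G) g : G) : G ⧸ N) := by
        intro g
        have := (hρ φ).1 g
        rw [hφ1] at this
        simpa using this
      have h2 : ∀ n : ↥N, (n : G) = (φ : MulAut G) (n : G) := by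
        intro n
        have := (hρ φ).2 n
        rw [hφ1] at this
        simpa using this
      have hzN : ∀ g : G, g⁻¹ * (φ : MulAut G) g ∈ N := fun g => (QuotientGroup.eq).mp (h1 g)
      have hfix : ∀ x : G, x ∈ N → (φ : MulAut G) x = x := fun x hx => (h2 ⟨x, hx⟩).symm
      have hzc : ∀ (g x : G), x ∈ N →
          (g⁻¹ * (φ : MulAut G) g) * x = x * (g⁻¹ * (φ : MulAut G) g) := by
        intro g x hx
        set w : G := (φ : MulAut G) g with hw
        set z : G := g⁻¹ * w with hz
        have key : (φ : MulAut G) (g * x * g⁻¹) = g * x * g⁻¹ :=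
          hfix _ (Subgroup.Normal.conj_mem ‹N.Normal› x hx g)
        rw [map_mul, map_mul, hfix x hx, map_inv] at key
        -- key : w * x * w⁻¹ = g * x * g⁻¹
        have h3 : z * x * z⁻¹ = g⁻¹ * (w * x * w⁻¹) * g := by
          rw [hz, mul_inv_rev, inv_inv]
          group
        rw [key] at h3
        have h4 : z * x * z⁻¹ = x := by rw [h3]; group
        have h5 := congrArg (fun y => y * z) h4
        simpa [mul_assoc] using h5
      have hmain : (φ : MulAut G) ^ p ^ k = 1 := by
        ext g
        set z : G := g⁻¹ * (φ : MulAut G) g with hz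
        have hphig : (φ : MulAut G) g = g * z := by rw [hz, mul_inv_cancel_left]
        have hiter : ∀ m : ℕ, ((φ : MulAut G) ^ m) g = g * z ^ m := by
          intro m
          induction m with
          | zero => simp
          | succ n ihn =>
            rw [pow_succ', MulAut.mul_apply, ihn, map_mul, hphig,
              hfix (z ^ n) (pow_mem (hzN g) n), mul_assoc, ← pow_succ']
        have hzmem : (⟨z, hzN g⟩ : ↥N) ∈ Subgroup.center ↥N := by
          refine Subgroup.mem_center_iff.mpr fun m => Subtype.ext ?_
          exact (hzc g (m : G) m.2).symm
        have hζ : (⟨⟨z, hzN g⟩, hzmem⟩ : ↥(Subgroup.center ↥N)) ^ p ^ k = 1 := by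
          rw [← hk]; exact pow_card_eq_one'
        have hzpow : z ^ p ^ k = 1 := by
          have := congrArg (fun x : ↥(Subgroup.center ↥N) => ((x : ↥N) : G)) hζ
          simpa using this
        show ((φ : MulAut G) ^ p ^ k) g = g
        rw [hiter (p ^ k), hzpow, mul_one]
      exact Subtype.ext (by rw [SubmonoidClass.coe_pow]; exact hmain)
    have hPker : IsPGroup p ↥ρ.ker := fun x =>
      ⟨k, Subtype.ext (by rw [SubmonoidClass.coe_pow]; exact hker x.1 x.2)⟩
    have hPker' : IsPGroup p ↥ρ.rangeRestrict.ker := by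
      rw [MonoidHom.ker_rangeRestrict]; exact hPker
    obtain ⟨n, hn⟩ := ker_nilpotent p ρ.rangeRestrict hPker'
    exact ⟨n, fun l hl hlen => hn l (fun x hx => RingHom.mem_ker.mp (hl x hx)) hlen⟩
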